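/- arXiv:2305.13554 — 2 statements merged into one kernel-verified Lean document; each statement's English description precedes it below -/
import Mathlib

section
/- Let a_0, …, a_n ∈ ℂ be pairwise distinct, let 0 ≤ k ≤ n+1 and let r > 0 satisfy |a_i| < r for every 0 ≤ i ≤ k−1 and |a_i| > r for every k ≤ i ≤ n. Let I ⊆ {0, …, k−1} and suppose g is a holomorphic disk component with g(ζ)² = ∏_{i=0}^{k−1} (r − conj(a_i)·ζ) · ∏_{i=k}^{n} (r·ζ − a_i) for all ζ ∈ 𝔻. Then each factor r − conj(a_i)·ζ (0 ≤ i ≤ k−1) is nonvanishing on 𝔻, and the functions 𝔲(ζ) := g(ζ)·∏_{i∈I} (rζ − a_i)/(r − conj(a_i)ζ), 𝔳(ζ) := g(ζ)·∏_{i∈{0,…,k−1}∖I} (rζ − a_i)/(r − conj(a_i)ζ), 𝔷(ζ) := rζ are holomorphic disk components satisfying: 𝔲(ζ)·𝔳(ζ) = ∏_{i=0}^{n} (rζ − a_i) = h(𝔷(ζ)) for all ζ ∈ 𝔻, where h(z) := ∏_{i=0}^{n} (z − a_i); and |𝔲(ζ)| = |𝔳(ζ)| and |𝔷(ζ)| =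 r for every ζ with |ζ| = 1. In particular ζ ↦ (𝔲(ζ), 𝔳(ζ), 𝔷(ζ)) maps 𝔻 into X̄ = {uv = h(z)} with boundary in the fiber L_{(0,r)} = {(u,v,z) ∈ X̄ : |u| = |v|, |z| = r}. -/
/-- A *holomorphic disk component*: a function on the closed unit disk `𝔻 ⊆ ℂ` which is
continuous on `𝔻` and complex differentiable on the open unit disk. -/
def IsHolomorphicDiskComponent (f : ℂ → ℂ) : Prop :=
  ContinuousOn f (Metric.closedBall 0 1) ∧ DifferentiableOn ℂ f (Metric.ball 0 1)

private lemma key_ne {r : ℝ} (hr : 0 < r) {b ζ : ℂ} (hb : ‖b‖ < r)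
    (hζ : ‖ζ‖ ≤ 1) : (r:ℂ) - (starRingEnd ℂ) b * ζ ≠ 0 := by
  intro h
  have h1 : (r:ℂ) = (starRingEnd ℂ) b * ζ := by linear_combination h
  have h2 := congrArg (‖·‖) h1
  simp only [norm_mul, Complex.norm_conj, Complex.norm_real, Real.norm_eq_abs] at h2
  have hb0 : 0 ≤ ‖b‖ := norm_nonneg b
  rw [abs_of_pos hr] at h2
  nlinarith

private lemma abs_circle {r : ℝ} {b ζ : ℂ} (hζ : ‖ζ‖ = 1) :
    ‖(r:ℂ) * ζ - b‖ = ‖(r:ℂ) - (starRingEnd ℂ) b * ζ‖ := by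
  have h1 : ζ * (starRingEnd ℂ) ζ = 1 := by
    rw [Complex.mul_conj]
    norm_cast
    rw [Complex.normSq_eq_norm_sq, hζ]
    norm_num
  have h2 : (r:ℂ) * ζ - b = ζ * (starRingEnd ℂ) ((r:ℂ) - (starRingEnd ℂ) b * ζ) := by
    simp only [map_sub, map_mul, Complex.conj_conj, Complex.conj_ofReal]
    linear_combination (b : ℂ) * h1
  rw [h2, norm_mul, hζ, one_mul, Complex.norm_conj]

private lemma hdc_aux {n : ℕ} (a : Fin (n+1) → ℂ) (r : ℝ) (g : ℂ → ℂ)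
    (hg : IsHolomorphicDiskComponent g) (s : Finset (Fin (n+1)))
    (hne : ∀ i ∈ s, ∀ ζ ∈ Metric.closedBall (0:ℂ) 1,
      (r:ℂ) - (starRingEnd ℂ) (a i) * ζ ≠ 0) :
    IsHolomorphicDiskComponent (fun ζ => g ζ *
      ∏ i ∈ s, ((r:ℂ) * ζ - a i) / ((r:ℂ) - (starRingEnd ℂ) (a i) * ζ)) := by
  constructor
  · refine hg.1.mul (continuousOn_finset_prod s fun i hi => ?_)
    refine ContinuousOn.div ?_ ?_ (fun ζ hζ => hne i hi ζ hζ)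
    · exact (continuous_const.mul continuous_id).sub continuous_const |>.continuousOn
    · exact (continuous_const.sub (continuous_const.mul continuous_id)).continuousOn
  · refine hg.2.mul (DifferentiableOn.fun_finset_prod fun i hi => ?_)
    refine DifferentiableOn.div ?_ ?_
      (fun ζ hζ => hne i hi ζ (Metric.ball_subset_closedBall hζ))
    · exact ((differentiable_const _).mul differentiable_id).sub (differentiable_const _)
      |>.differentiableOn
    · exact ((differentiable_const _).sub ((differentiable_const _).mul differentiable_id))
      |>.differentiableOn

/-- Explicit Blaschke-product holomorphic disks in the class `β_{k,I}`:
for `|a i| < r` (`i < k`), `|a i| > r` (`i ≥ k`), `I ⊆ {0,…,k−1}` and a square root `g`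
of `∏_{i<k} (r − conj(a i)·ζ) · ∏_{i≥k} (r·ζ − a i)`, the factors `r − conj(a i)·ζ`
are nonvanishing on `𝔻`, the functions `𝔲, 𝔳, 𝔷` are holomorphic disk components with
`𝔲·𝔳 = ∏_i (𝔷 − a i) = h(𝔷)` on `𝔻`, and `|𝔲| = |𝔳|`, `|𝔷| = r` on the unit circle,
so the disk maps into `X̄ = {uv = h(z)}` with boundary on the fiber `L₍₀,ᵣ₎`. -/
theorem blaschke_disks (n : ℕ) (a : Fin (n+1) → ℂ) (ha : Function.Injective a)
    (k : ℕ) (hk : k ≤ n + 1) (r : ℝ) (hr : 0 < r)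
    (hlt : ∀ i : Fin (n+1), (i:ℕ) < k → ‖a i‖ < r)
    (hgt : ∀ i : Fin (n+1), k ≤ (i:ℕ) → r < ‖a i‖)
    (I : Finset (Fin (n+1))) (hI : ∀ i ∈ I, (i:ℕ) < k)
    (g : ℂ → ℂ) (hg : IsHolomorphicDiskComponent g)
    (hg2 : ∀ ζ ∈ Metric.closedBall (0:ℂ) 1,
      (g ζ)^2 = ∏ i : Fin (n+1),
        (if (i:ℕ) < k then (r:ℂ) - (starRingEnd ℂ) (a i) * ζ else (r:ℂ) * ζ - a i))
    (u v z : ℂ → ℂ)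
    (hu : u = fun ζ => g ζ *
      ∏ i ∈ I, ((r:ℂ) * ζ - a i) / ((r:ℂ) - (starRingEnd ℂ) (a i) * ζ))
    (hv : v = fun ζ => g ζ *
      ∏ i ∈ Finset.univ.filter (fun i : Fin (n+1) => (i:ℕ) < k ∧ i ∉ I),
        ((r:ℂ) * ζ - a i) / ((r:ℂ) - (starRingEnd ℂ) (a i) * ζ))
    (hz : z = fun ζ => (r:ℂ) * ζ) :
    (∀ i : Fin (n+1), (i:ℕ) < k → ∀ ζ ∈ Metric.closedBall (0:ℂ) 1,
      (r:ℂ) - (starRingEnd ℂ) (a i) * ζ ≠ 0) ∧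
    IsHolomorphicDiskComponent u ∧ IsHolomorphicDiskComponent v ∧
    IsHolomorphicDiskComponent z ∧
    (∀ ζ ∈ Metric.closedBall (0:ℂ) 1,
      u ζ * v ζ = ∏ i : Fin (n+1), (z ζ - a i)) ∧
    (∀ ζ : ℂ, ‖ζ‖ = 1 →
      ‖u ζ‖ = ‖v ζ‖ ∧ ‖z ζ‖ = r) := by
  classical
  have hne : ∀ i : Fin (n+1), (i:ℕ) < k → ∀ ζ ∈ Metric.closedBall (0:ℂ) 1,
      (r:ℂ) - (starRingEnd ℂ) (a i) * ζ ≠ 0 := by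
    intro i hik ζ hζ
    exact key_ne hr (hlt i hik) (by simpa [Complex.dist_eq] using hζ)
  set P : Finset (Fin (n+1)) := Finset.univ.filter (fun i => (i:ℕ) < k) with hP
  have hIP : I ⊆ P := fun i hi => by simp [hP, hI i hi]
  have hsd : P \ I = Finset.univ.filter (fun i : Fin (n+1) => (i:ℕ) < k ∧ i ∉ I) := by
    ext i; simp [hP, Finset.mem_sdiff]
  refine ⟨hne, ?_, ?_, ?_, ?_, ?_⟩
  · rw [hu]; exact hdc_aux a r g hg I (fun i hi => hne i (hI i hi))
  · rw [hv]; exact hdc_aux a r g hg _ (fun i hi => hne i ((Finset.mem_filter.mp hi).2.1))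
  · rw [hz]
    exact ⟨(continuous_const.mul continuous_id).continuousOn,
      ((differentiable_const _).mul differentiable_id).differentiableOn⟩
  · intro ζ hζ
    rw [hu, hv, hz]
    simp only
    set f : Fin (n+1) → ℂ := fun i => ((r:ℂ) * ζ - a i) / ((r:ℂ) - (starRingEnd ℂ) (a i) * ζ)
      with hf
    have key : (∏ i ∈ I, f i) * ∏ i ∈ Finset.univ.filter
        (fun i : Fin (n+1) => (i:ℕ) < k ∧ i ∉ I), f i = ∏ i ∈ P, f i := by
      rw [← hsd, mul_comm, Finset.prod_sdiff hIP]
    have hcombine : g ζ * (∏ i ∈ I, f i) * (g ζ * ∏ i ∈ Finset.univ.filter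
        (fun i : Fin (n+1) => (i:ℕ) < k ∧ i ∉ I), f i) = (g ζ)^2 * ∏ i ∈ P, f i := by
      rw [← key]; ring
    rw [hcombine, hg2 ζ hζ, Finset.prod_ite]
    rw [show (Finset.univ.filter fun i : Fin (n+1) => (i:ℕ) < k) = P from rfl]
    have step : (∏ i ∈ P, ((r:ℂ) - (starRingEnd ℂ) (a i) * ζ)) * (∏ i ∈ P, f i)
        = ∏ i ∈ P, ((r:ℂ) * ζ - a i) := by
      rw [← Finset.prod_mul_distrib]
      refine Finset.prod_congr rfl fun i hi => ?_
      have hik : (i:ℕ) < k := by simpa [hP] using hi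
      rw [hf, mul_comm, div_mul_cancel₀ _ (hne i hik ζ hζ)]
    calc (∏ i ∈ P, ((r:ℂ) - (starRingEnd ℂ) (a i) * ζ)) *
          (∏ i ∈ Finset.univ.filter (fun i : Fin (n+1) => ¬ (i:ℕ) < k),
            ((r:ℂ) * ζ - a i)) * ∏ i ∈ P, f i
        = (∏ i ∈ P, ((r:ℂ) * ζ - a i)) *
          ∏ i ∈ Finset.univ.filter (fun i : Fin (n+1) => ¬ (i:ℕ) < k),
            ((r:ℂ) * ζ - a i) := by rw [← step]; ring
      _ = ∏ i : Fin (n+1), ((r:ℂ) * ζ - a i) := by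
          rw [hP, Finset.prod_filter_mul_prod_filter_not]
  · intro ζ hζ
    have hζa : ‖ζ‖ = 1 := by exact hζ
    have hmem : ζ ∈ Metric.closedBall (0:ℂ) 1 := by
      simp [Complex.dist_eq, hζa]
    have habs1 : ∀ i : Fin (n+1), (i:ℕ) < k →
        ‖((r:ℂ) * ζ - a i) / ((r:ℂ) - (starRingEnd ℂ) (a i) * ζ)‖ = 1 := by
      intro i hik
      rw [norm_div, abs_circle hζ, div_self]
      exact fun h => hne i hik ζ hmem (by rwa [← norm_eq_zero])
    constructor
    · rw [hu, hv]
      simp only [norm_mul, norm_prod]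
      rw [Finset.prod_eq_one (fun i hi => habs1 i (hI i hi)),
        Finset.prod_eq_one (fun i hi => habs1 i ((Finset.mem_filter.mp hi).2.1))]
    · rw [hz]
      simp [hζa, abs_of_pos hr]
end

section
/- Let a_0, …, a_n ∈ ℂ be pairwise distinct, let 0 ≤ k ≤ n+1 and let r > 0 satisfy |a_i| < r for every 0 ≤ i ≤ k−1 and |a_i| > r for every k ≤ i ≤ n. Let 𝔲, 𝔳 be holomorphic disk components with 𝔲(ζ)·𝔳(ζ) = ∏_{i=0}^{n} (rζ − a_i) for all ζ ∈ 𝔻 and |𝔲(ζ)| = |𝔳(ζ)| for all ζ with |ζ| = 1. Then 𝔲 and 𝔳 have no zeros on the unit circle, and there exist a subset I ⊆ {0, …, k−1} and λ ∈ ℂ with |λ| = 1 such that: (i) the zero set of 𝔲 in 𝔻 is exactly {a_i/r : i ∈ I} and the zero set of 𝔳 in 𝔻 is exactly {a_i/r : i ∈ {0,…,k−1} ∖ I}; (ii) for every ζ ∈ 𝔻, 𝔲(ζ)·∏_{i∈I}(r − conj(a_i)ζ)·∏_{i∈{0,…,k−1}∖I}(rζ − a_i) = λ·𝔳(ζ)·∏_{i∈{0,…,k−1}∖I}(r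 − conj(a_i)ζ)·∏_{i∈I}(rζ − a_i). -/
open Metric Finset

lemma hdc_peel {f : ℂ → ℂ} (hf : IsHolomorphicDiskComponent f) {c : ℂ}
    (hc : c ∈ Metric.ball (0:ℂ) 1) (h0 : f c = 0) :
    ∃ g : ℂ → ℂ, IsHolomorphicDiskComponent g ∧ ∀ ζ, f ζ = (ζ - c) * g ζ := by
  refine ⟨dslope f c, ⟨?_, ?_⟩, ?_⟩
  · rw [continuousOn_dslope (closedBall_mem_nhds_of_mem hc)]
    exact ⟨hf.1, hf.2.differentiableAt (Metric.isOpen_ball.mem_nhds hc)⟩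
  · exact (Complex.differentiableOn_dslope (Metric.isOpen_ball.mem_nhds hc)).2 hf.2
  · intro ζ
    have := sub_smul_dslope f c ζ
    rw [h0, sub_zero, smul_eq_mul] at this
    exact this.symm

lemma hdc_peel_finset {ι : Type*} [DecidableEq ι] (S : Finset ι) :
    ∀ (f : ℂ → ℂ), IsHolomorphicDiskComponent f →
    ∀ (b : ι → ℂ), (∀ i ∈ S, b i ∈ Metric.ball (0:ℂ) 1) →
    (∀ i ∈ S, ∀ j ∈ S, b i = b j → i = j) →
    (∀ i ∈ S, f (b i) = 0) →
    ∃ g : ℂ → ℂ, IsHolomorphicDiskComponent g ∧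
      ∀ ζ, f ζ = (∏ i ∈ S, (ζ - b i)) * g ζ := by
  induction S using Finset.induction_on with
  | empty => intro f hf b _ _ _; exact ⟨f, hf, by simp⟩
  | @insert i S hi ih =>
    intro f hf b hb hinj h0
    obtain ⟨g₁, hg₁, hfg₁⟩ := hdc_peel hf (hb i (mem_insert_self i S))
      (h0 i (mem_insert_self i S))
    have hg₁0 : ∀ j ∈ S, g₁ (b j) = 0 := by
      intro j hj
      have hne : b j - b i ≠ 0 := by
        intro h
        exact hi (hinj j (mem_insert_of_mem hj) i (mem_insert_self i S)
          (sub_eq_zero.1 h) ▸ hj)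
      have := h0 j (mem_insert_of_mem hj)
      rw [hfg₁ (b j)] at this
      exact (mul_eq_zero.1 this).resolve_left hne
    obtain ⟨g, hg, hgg⟩ := ih g₁ hg₁ b (fun j hj => hb j (mem_insert_of_mem hj))
      (fun j hj l hl => hinj j (mem_insert_of_mem hj) l (mem_insert_of_mem hl)) hg₁0
    refine ⟨g, hg, fun ζ => ?_⟩
    rw [hfg₁ ζ, hgg ζ, Finset.prod_insert hi]
    ring

lemma eqOn_closedBall_extend {f g : ℂ → ℂ}
    (hf : ContinuousOn f (Metric.closedBall 0 1))
    (hg : ContinuousOn g (Metric.closedBall 0 1))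
    (T : Set ℂ) (hT : T.Finite) (hTb : T ⊆ Metric.ball 0 1)
    (h : ∀ ζ ∈ Metric.closedBall (0:ℂ) 1, ζ ∉ T → f ζ = g ζ) :
    ∀ ζ ∈ Metric.closedBall (0:ℂ) 1, f ζ = g ζ := by
  intro x hx
  by_cases hxT : x ∈ T
  swap
  · exact h x hx hxT
  have hxb : x ∈ Metric.ball (0:ℂ) 1 := hTb hxT
  set s : Set ℂ := Metric.closedBall 0 1 ∩ (T \ {x})ᶜ with hs
  have hsnhds : s ∈ nhds x := by
    refine Filter.inter_mem (closedBall_mem_nhds_of_mem hxb) ?_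
    refine ((hT.subset Set.diff_subset).isClosed.isOpen_compl).mem_nhds ?_
    simp
  have hsub : s ∩ {x}ᶜ ⊆ Metric.closedBall 0 1 ∩ Tᶜ := by
    rintro z ⟨⟨hz1, hz2⟩, hz3⟩
    refine ⟨hz1, fun hzT => ?_⟩
    exact hz2 ⟨hzT, hz3⟩
  have hfilt : nhdsWithin x (s ∩ {x}ᶜ) = nhdsWithin x {x}ᶜ :=
    nhdsWithin_inter_of_mem (mem_nhdsWithin_of_mem_nhds hsnhds)
  have hne : (nhdsWithin x (s ∩ {x}ᶜ)).NeBot := by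
    rw [hfilt]; infer_instance
  have h1 : Filter.Tendsto f (nhdsWithin x (s ∩ {x}ᶜ)) (nhds (f x)) :=
    ((hf x hx).mono (hsub.trans Set.inter_subset_left)).tendsto
  have h2 : Filter.Tendsto g (nhdsWithin x (s ∩ {x}ᶜ)) (nhds (g x)) :=
    ((hg x hx).mono (hsub.trans Set.inter_subset_left)).tendsto
  have h1' : Filter.Tendsto g (nhdsWithin x (s ∩ {x}ᶜ)) (nhds (f x)) := by
    refine h1.congr' ?_
    filter_upwards [self_mem_nhdsWithin] with z hz
    exact h z (hsub hz).1 (hsub hz).2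
  exact tendsto_nhds_unique h1' h2

lemma unimodular_ratio {φ ψ : ℂ → ℂ}
    (hφ : IsHolomorphicDiskComponent φ) (hψ : IsHolomorphicDiskComponent ψ)
    (hφ0 : ∀ ζ ∈ Metric.closedBall (0:ℂ) 1, φ ζ ≠ 0)
    (hψ0 : ∀ ζ ∈ Metric.closedBall (0:ℂ) 1, ψ ζ ≠ 0)
    (hb : ∀ ζ : ℂ, ‖ζ‖ = 1 → ‖φ ζ‖ = ‖ψ ζ‖) :
    ∃ lam : ℂ, ‖lam‖ = 1 ∧
      ∀ ζ ∈ Metric.closedBall (0:ℂ) 1, φ ζ = lam * ψ ζ := by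
  have hclos : closure (Metric.ball (0:ℂ) 1) = Metric.closedBall 0 1 :=
    closure_ball 0 one_ne_zero
  have hfront : frontier (Metric.ball (0:ℂ) 1) = Metric.sphere 0 1 :=
    frontier_ball 0 one_ne_zero
  have hsphere : ∀ z ∈ Metric.sphere (0:ℂ) 1, ‖z‖ = 1 := by
    intro z hz; simpa using hz
  have hsub : Metric.sphere (0:ℂ) 1 ⊆ Metric.closedBall 0 1 := Metric.sphere_subset_closedBall
  set g : ℂ → ℂ := fun ζ => φ ζ / ψ ζ with hgdef
  set g' : ℂ → ℂ := fun ζ => ψ ζ / φ ζ with hg'def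
  have hgd : DifferentiableOn ℂ g (Metric.ball 0 1) :=
    hφ.2.div hψ.2 (fun ζ hζ => hψ0 ζ (Metric.ball_subset_closedBall hζ))
  have hgc : ContinuousOn g (Metric.closedBall 0 1) := hφ.1.div hψ.1 hψ0
  have hg'd : DifferentiableOn ℂ g' (Metric.ball 0 1) :=
    hψ.2.div hφ.2 (fun ζ hζ => hφ0 ζ (Metric.ball_subset_closedBall hζ))
  have hg'c : ContinuousOn g' (Metric.closedBall 0 1) := hψ.1.div hφ.1 hφ0
  have hgle : ∀ z ∈ Metric.closedBall (0:ℂ) 1, ‖g z‖ ≤ 1 := by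
    intro z hz
    refine Complex.norm_le_of_forall_mem_frontier_norm_le Metric.isBounded_ball
      ⟨hgd, hclos ▸ hgc⟩ ?_ (hclos ▸ hz)
    intro w hw
    rw [hfront] at hw
    have h1 : ‖w‖ = 1 := hsphere w hw
    have : ‖φ w‖ = ‖ψ w‖ := hb w h1
    simp only [hgdef, norm_div]
    rw [this]
    rcases eq_or_ne (‖ψ w‖) 0 with h | h
    · simp [h]
    · rw [div_self h]
  have hg'le : ∀ z ∈ Metric.closedBall (0:ℂ) 1, ‖g' z‖ ≤ 1 := by
    intro z hz
    refine Complex.norm_le_of_forall_mem_frontier_norm_le Metric.isBounded_ball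
      ⟨hg'd, hclos ▸ hg'c⟩ ?_ (hclos ▸ hz)
    intro w hw
    rw [hfront] at hw
    have h1 : ‖w‖ = 1 := hsphere w hw
    have : ‖φ w‖ = ‖ψ w‖ := hb w h1
    simp only [hg'def, norm_div]
    rw [← this]
    rcases eq_or_ne (‖φ w‖) 0 with h | h
    · simp [h]
    · rw [div_self h]
  have hgeq1 : ∀ z ∈ Metric.closedBall (0:ℂ) 1, ‖g z‖ = 1 := by
    intro z hz
    have h1 := hgle z hz
    have h2 := hg'le z hz
    have hφz := hφ0 z hz
    have hψz := hψ0 z hz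
    have e1 : ‖g z‖ = ‖φ z‖ / ‖ψ z‖ := by simp [hgdef, norm_div]
    have e2 : ‖g' z‖ = ‖ψ z‖ / ‖φ z‖ := by simp [hg'def, norm_div]
    have hφn : 0 < ‖φ z‖ := norm_pos_iff.2 hφz
    have hψn : 0 < ‖ψ z‖ := norm_pos_iff.2 hψz
    rw [e1] at h1 ⊢
    rw [e2] at h2
    rw [div_le_one hψn] at h1
    rw [div_le_one hφn] at h2
    rw [div_eq_one_iff_eq hψn.ne']
    linarith
  have hmax : IsMaxOn (norm ∘ g) (Metric.ball 0 1) 0 := by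
    intro z hz
    simp only [Function.comp_apply, Set.mem_setOf_eq]
    rw [hgeq1 z (Metric.ball_subset_closedBall hz),
      hgeq1 0 (Metric.mem_closedBall_self zero_le_one)]
  have hconst := Complex.eqOn_of_isPreconnected_of_isMaxOn_norm
    (convex_ball (0:ℂ) 1).isPreconnected Metric.isOpen_ball hgd
    (Metric.mem_ball_self one_pos) hmax
  have hconstc : ∀ ζ ∈ Metric.closedBall (0:ℂ) 1, g ζ = g 0 := by
    intro ζ hζ
    have hζ' : ζ ∈ closure (Metric.ball (0:ℂ) 1) := by rw [hclos]; exact hζ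
    have hne : (nhdsWithin ζ (Metric.ball (0:ℂ) 1)).NeBot :=
      mem_closure_iff_nhdsWithin_neBot.1 hζ'
    have t1 : Filter.Tendsto g (nhdsWithin ζ (Metric.ball 0 1)) (nhds (g ζ)) :=
      ((hgc ζ hζ).mono Metric.ball_subset_closedBall).tendsto
    have t2 : Filter.Tendsto g (nhdsWithin ζ (Metric.ball 0 1)) (nhds (g 0)) := by
      refine Filter.Tendsto.congr' ?_ tendsto_const_nhds
      filter_upwards [self_mem_nhdsWithin] with z hz
      exact (hconst hz).symm
    exact tendsto_nhds_unique t1 t2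
  refine ⟨g 0, ?_, ?_⟩
  · exact hgeq1 0 (Metric.mem_closedBall_self zero_le_one)
  · intro ζ hζ
    have h1 := hconstc ζ hζ
    simp only [Function.const_apply, hgdef] at h1
    have h2 := hψ0 ζ hζ
    field_simp at h1
    rw [h1]; ring

/-- Classification of holomorphic disks `(𝔲, 𝔳, rζ)` in the
`Aₙ`-smoothing with boundary on the fiber `L₍₀,ᵣ₎`: if `𝔲·𝔳 = ∏_i (rζ − a i)` on `𝔻`
and `|𝔲| = |𝔳|` on the unit circle, then `𝔲, 𝔳` have no zeros on the circle and there
are `I ⊆ {0,…,k−1}` and a unimodular constant `λ` such that the zero sets of `𝔲` and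
`𝔳` in `𝔻` are `{a i / r : i ∈ I}` and `{a i / r : i ∈ {0,…,k−1} ∖ I}` respectively,
and `𝔲` agrees with `λ·𝔳` after matching Blaschke factors. -/
theorem blaschke_classification (n : ℕ) (a : Fin (n+1) → ℂ) (ha : Function.Injective a)
    (k : ℕ) (hk : k ≤ n + 1) (r : ℝ) (hr : 0 < r)
    (hlt : ∀ i : Fin (n+1), (i:ℕ) < k → ‖a i‖ < r)
    (hgt : ∀ i : Fin (n+1), k ≤ (i:ℕ) → r < ‖a i‖)
    (u v : ℂ → ℂ)
    (hu : IsHolomorphicDiskComponent u) (hv : IsHolomorphicDiskComponent v)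
    (huv : ∀ ζ ∈ Metric.closedBall (0:ℂ) 1,
      u ζ * v ζ = ∏ i : Fin (n+1), ((r:ℂ) * ζ - a i))
    (hbd : ∀ ζ : ℂ, ‖ζ‖ = 1 → ‖u ζ‖ = ‖v ζ‖) :
    (∀ ζ : ℂ, ‖ζ‖ = 1 → u ζ ≠ 0 ∧ v ζ ≠ 0) ∧
    ∃ (I : Finset (Fin (n+1))) (lam : ℂ),
      (∀ i ∈ I, (i:ℕ) < k) ∧ ‖lam‖ = 1 ∧
      ({ζ ∈ Metric.closedBall (0:ℂ) 1 | u ζ = 0}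
        = (fun i : Fin (n+1) => a i / (r:ℂ)) '' ↑I) ∧
      ({ζ ∈ Metric.closedBall (0:ℂ) 1 | v ζ = 0}
        = (fun i : Fin (n+1) => a i / (r:ℂ)) '' {i : Fin (n+1) | (i:ℕ) < k ∧ i ∉ I}) ∧
      (∀ ζ ∈ Metric.closedBall (0:ℂ) 1,
        u ζ * (∏ i ∈ I, ((r:ℂ) - (starRingEnd ℂ) (a i) * ζ))
            * (∏ i ∈ Finset.univ.filter (fun i : Fin (n+1) => (i:ℕ) < k ∧ i ∉ I),
                ((r:ℂ) * ζ - a i))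
          = lam * v ζ
            * (∏ i ∈ Finset.univ.filter (fun i : Fin (n+1) => (i:ℕ) < k ∧ i ∉ I),
                ((r:ℂ) - (starRingEnd ℂ) (a i) * ζ))
            * (∏ i ∈ I, ((r:ℂ) * ζ - a i))) := by
  classical
  have hrC : (r:ℂ) ≠ 0 := by exact_mod_cast hr.ne'
  set b : Fin (n+1) → ℂ := fun i => a i / (r:ℂ) with hbdef
  have hfac : ∀ (i : Fin (n+1)) (ζ : ℂ), (r:ℂ) * ζ - a i = (r:ℂ) * (ζ - b i) := by
    intro i ζ; simp only [hbdef]; field_simp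
  have hrb : ∀ i : Fin (n+1), (r:ℂ) * b i = a i := by
    intro i; simp only [hbdef]; field_simp
  have habs : ∀ i : Fin (n+1), ‖b i‖ = ‖a i‖ / r := by
    intro i
    simp only [hbdef]
    rw [norm_div, Complex.norm_of_nonneg hr.le]
  have hbball : ∀ i : Fin (n+1), (i:ℕ) < k → b i ∈ Metric.ball (0:ℂ) 1 := by
    intro i hik
    rw [Metric.mem_ball, dist_zero_right, habs, div_lt_one hr]
    exact hlt i hik
  have hbcb : ∀ i : Fin (n+1), (i:ℕ) < k → b i ∈ Metric.closedBall (0:ℂ) 1 :=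
    fun i hik => Metric.ball_subset_closedBall (hbball i hik)
  have hbout : ∀ i : Fin (n+1), k ≤ (i:ℕ) → 1 < ‖b i‖ := by
    intro i hik; rw [habs, lt_div_iff₀ hr, one_mul]; exact hgt i hik
  have hbinj : Function.Injective b := by
    intro i j hij
    apply ha
    have : (r:ℂ) * b i = (r:ℂ) * b j := by rw [hij]
    rwa [hrb, hrb] at this
  -- Part 1 : no zeros on the circle
  have hcirc : ∀ ζ : ℂ, ‖ζ‖ = 1 → u ζ ≠ 0 ∧ v ζ ≠ 0 := by
    intro ζ hζ1
    have hζcb : ζ ∈ Metric.closedBall (0:ℂ) 1 := by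
      rw [mem_closedBall_zero_iff]; exact le_of_eq hζ1
    have hne : ∀ i : Fin (n+1), (r:ℂ) * ζ - a i ≠ 0 := by
      intro i h
      have h2 : ‖(r:ℂ) * ζ‖ = ‖a i‖ := by
        rw [sub_eq_zero] at h; rw [h]
      rw [norm_mul, Complex.norm_of_nonneg hr.le, hζ1,
        mul_one] at h2
      rcases lt_or_ge (i : ℕ) k with hik | hik
      · exact absurd (h2 ▸ hlt i hik) (lt_irrefl _)
      · exact absurd (h2 ▸ hgt i hik) (lt_irrefl _)
    have := huv ζ hζcb
    have hprodne : (∏ i : Fin (n+1), ((r:ℂ) * ζ - a i)) ≠ 0 :=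
      Finset.prod_ne_zero_iff.2 fun i _ => hne i
    rw [← this] at hprodne
    exact mul_ne_zero_iff.1 hprodne
  -- each b i (i < k) is a zero of exactly one of u, v
  have hu0v0 : ∀ i : Fin (n+1), (i:ℕ) < k → u (b i) = 0 ∨ v (b i) = 0 := by
    intro i hik
    have h1 := huv (b i) (hbcb i hik)
    have h2 : (∏ j : Fin (n+1), ((r:ℂ) * b i - a j)) = 0 :=
      Finset.prod_eq_zero (Finset.mem_univ i) (by rw [hrb i, sub_self])
    rw [h2] at h1
    exact mul_eq_zero.1 h1
  have hnotboth : ∀ i : Fin (n+1), (i:ℕ) < k → u (b i) = 0 → v (b i) = 0 → False := by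
    intro i hik hu0 hv0
    obtain ⟨du, hdu, hud⟩ := hdc_peel hu (hbball i hik) hu0
    obtain ⟨dv, hdv, hvd⟩ := hdc_peel hv (hbball i hik) hv0
    have key : ∀ ζ ∈ Metric.closedBall (0:ℂ) 1,
        (ζ - b i) * (du ζ * dv ζ)
          = (r:ℂ) * ∏ j ∈ Finset.univ.erase i, ((r:ℂ) * ζ - a j) := by
      apply eqOn_closedBall_extend
      · exact ((continuousOn_id.sub continuousOn_const).mul (hdu.1.mul hdv.1))
      · exact (continuous_const.mul
          (continuous_finset_prod _ fun j _ => by fun_prop)).continuousOn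
      · exact (Set.finite_singleton (b i))
      · intro z hz; rw [Set.mem_singleton_iff] at hz; rw [hz]; exact hbball i hik
      · intro ζ hζ hζT
        have h1 := huv ζ hζ
        rw [hud ζ, hvd ζ,
          ← Finset.mul_prod_erase _ _ (Finset.mem_univ i), hfac i ζ] at h1
        have hne : ζ - b i ≠ 0 := sub_ne_zero.2 (by simpa using hζT)
        apply mul_left_cancel₀ hne
        linear_combination h1
    have h3 := key (b i) (hbcb i hik)
    rw [sub_self, zero_mul] at h3
    have h4 : (r:ℂ) * ∏ j ∈ Finset.univ.erase i, ((r:ℂ) * b i - a j) ≠ 0 := by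
      refine mul_ne_zero hrC (Finset.prod_ne_zero_iff.2 fun j hj => ?_)
      rw [hrb i]
      exact sub_ne_zero.2 fun h => (Finset.mem_erase.1 hj).1 (ha h).symm
    exact h4 h3.symm
  -- the index sets
  set I : Finset (Fin (n+1)) :=
    Finset.univ.filter (fun i => (i:ℕ) < k ∧ u (b i) = 0) with hIdef
  set Ic : Finset (Fin (n+1)) :=
    Finset.univ.filter (fun i : Fin (n+1) => (i:ℕ) < k ∧ i ∉ I) with hIcdef
  have hmemI : ∀ i : Fin (n+1), i ∈ I ↔ (i:ℕ) < k ∧ u (b i) = 0 := by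
    intro i; simp [hIdef]
  have hmemIc : ∀ i : Fin (n+1), i ∈ Ic ↔ (i:ℕ) < k ∧ v (b i) = 0 := by
    intro i
    simp only [hIcdef, Finset.mem_filter, Finset.mem_univ, true_and]
    constructor
    · rintro ⟨hik, hiI⟩
      refine ⟨hik, ?_⟩
      rcases hu0v0 i hik with h | h
      · exact absurd ((hmemI i).2 ⟨hik, h⟩) hiI
      · exact h
    · rintro ⟨hik, hvi⟩
      refine ⟨hik, fun hiI => ?_⟩
      exact hnotboth i hik ((hmemI i).1 hiI).2 hvi
  have hIk : ∀ i ∈ I, (i:ℕ) < k := fun i hi => ((hmemI i).1 hi).1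
  have hIck : ∀ i ∈ Ic, (i:ℕ) < k := fun i hi => ((hmemIc i).1 hi).1
  have hdisj : Disjoint I Ic := by
    rw [Finset.disjoint_left]
    intro i hiI hiIc
    exact hnotboth i (hIk i hiI) ((hmemI i).1 hiI).2 ((hmemIc i).1 hiIc).2
  -- peel off the zeros
  obtain ⟨p, hp, hup⟩ := hdc_peel_finset I u hu b (fun i hi => hbball i (hIk i hi))
    (fun i _ j _ h => hbinj h) (fun i hi => ((hmemI i).1 hi).2)
  obtain ⟨q, hq, hvq⟩ := hdc_peel_finset Ic v hv b (fun i hi => hbball i (hIck i hi))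
    (fun i _ j _ h => hbinj h) (fun i hi => ((hmemIc i).1 hi).2)
  -- p and q are nonvanishing on the closed disk
  have hRne : ∀ ζ ∈ Metric.closedBall (0:ℂ) 1,
      (∏ j ∈ Finset.univ \ (I ∪ Ic), (ζ - b j)) ≠ 0 := by
    intro ζ hζ
    refine Finset.prod_ne_zero_iff.2 fun j hj => ?_
    rw [Finset.mem_sdiff, Finset.mem_union] at hj
    have hjk : k ≤ (j:ℕ) := by
      by_contra hc
      push_neg at hc
      rcases hu0v0 j hc with h | h
      · exact hj.2 (Or.inl ((hmemI j).2 ⟨hc, h⟩))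
      · exact hj.2 (Or.inr ((hmemIc j).2 ⟨hc, h⟩))
    intro h
    rw [sub_eq_zero] at h
    have h1 : ‖ζ‖ ≤ 1 := by
      rw [← mem_closedBall_zero_iff]; exact hζ
    rw [h] at h1
    exact absurd (hbout j hjk) (not_lt.2 h1)
  have hpq : ∀ ζ ∈ Metric.closedBall (0:ℂ) 1,
      p ζ * q ζ = (r:ℂ)^(n+1) * ∏ j ∈ Finset.univ \ (I ∪ Ic), (ζ - b j) := by
    apply eqOn_closedBall_extend (hp.1.mul hq.1)
      ((continuous_const.mul (continuous_finset_prod _ fun j _ => by fun_prop)).continuousOn)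
      (b '' ↑(I ∪ Ic)) ((I ∪ Ic).finite_toSet.image b)
    · rintro z ⟨i, hi, rfl⟩
      rw [Finset.mem_coe, Finset.mem_union] at hi
      rcases hi with h | h
      · exact hbball i (hIk i h)
      · exact hbball i (hIck i h)
    · intro ζ hζ hζT
      have h1 := huv ζ hζ
      rw [hup ζ, hvq ζ] at h1
      have h2 : (∏ i : Fin (n+1), ((r:ℂ) * ζ - a i))
          = (r:ℂ)^(n+1) * ∏ i : Fin (n+1), (ζ - b i) := by
        rw [Finset.prod_congr rfl (fun i _ => hfac i ζ), Finset.prod_mul_distrib,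
          Finset.prod_const, Finset.card_univ, Fintype.card_fin]
      have h3 : (∏ i : Fin (n+1), (ζ - b i))
          = (∏ j ∈ Finset.univ \ (I ∪ Ic), (ζ - b j))
            * ((∏ i ∈ I, (ζ - b i)) * (∏ i ∈ Ic, (ζ - b i))) := by
        rw [← Finset.prod_union hdisj, Finset.prod_sdiff (Finset.subset_univ _)]
      rw [h2, h3] at h1
      have hne : (∏ i ∈ I, (ζ - b i)) * (∏ i ∈ Ic, (ζ - b i)) ≠ 0 := by
        refine mul_ne_zero ?_ ?_ <;>
        · refine Finset.prod_ne_zero_iff.2 fun i hi => sub_ne_zero.2 fun h => ?_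
          exact hζT ⟨i, by simp [Finset.mem_union, hi], h.symm⟩
      apply mul_left_cancel₀ hne
      simp only [Pi.mul_apply]
      linear_combination h1
  have hp0 : ∀ ζ ∈ Metric.closedBall (0:ℂ) 1, p ζ ≠ 0 := by
    intro ζ hζ h
    have := hpq ζ hζ
    rw [h, zero_mul] at this
    exact (mul_ne_zero (pow_ne_zero _ hrC) (hRne ζ hζ)) this.symm
  have hq0 : ∀ ζ ∈ Metric.closedBall (0:ℂ) 1, q ζ ≠ 0 := by
    intro ζ hζ h
    have := hpq ζ hζ
    rw [h, mul_zero] at this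
    exact (mul_ne_zero (pow_ne_zero _ hrC) (hRne ζ hζ)) this.symm
  -- zero sets
  have hZu : {ζ ∈ Metric.closedBall (0:ℂ) 1 | u ζ = 0} = b '' ↑I := by
    ext ζ
    simp only [Set.mem_setOf_eq, Set.mem_image, Finset.mem_coe]
    constructor
    · rintro ⟨hζ, h0⟩
      rw [hup ζ] at h0
      rcases mul_eq_zero.1 h0 with h | h
      · obtain ⟨i, hiI, hz⟩ := Finset.prod_eq_zero_iff.1 h
        exact ⟨i, hiI, (sub_eq_zero.1 hz).symm⟩
      · exact absurd h (hp0 ζ hζ)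
    · rintro ⟨i, hiI, rfl⟩
      exact ⟨hbcb i (hIk i hiI), ((hmemI i).1 hiI).2⟩
  have hZv : {ζ ∈ Metric.closedBall (0:ℂ) 1 | v ζ = 0} = b '' ↑Ic := by
    ext ζ
    simp only [Set.mem_setOf_eq, Set.mem_image, Finset.mem_coe]
    constructor
    · rintro ⟨hζ, h0⟩
      rw [hvq ζ] at h0
      rcases mul_eq_zero.1 h0 with h | h
      · obtain ⟨i, hiI, hz⟩ := Finset.prod_eq_zero_iff.1 h
        exact ⟨i, hiI, (sub_eq_zero.1 hz).symm⟩
      · exact absurd h (hq0 ζ hζ)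
    · rintro ⟨i, hiI, rfl⟩
      exact ⟨hbcb i (hIck i hiI), ((hmemIc i).1 hiI).2⟩
  -- the comparison functions
  set A : Finset (Fin (n+1)) → ℂ → ℂ :=
    fun S ζ => ∏ i ∈ S, ((r:ℂ) - (starRingEnd ℂ) (a i) * ζ) with hAdef
  have hAcont : ∀ S, Continuous (A S) := by
    intro S; exact continuous_finset_prod _ fun i _ => by fun_prop
  have hAdiff : ∀ S, Differentiable ℂ (A S) := by
    intro S; exact Differentiable.fun_finsetProd fun i _ => by fun_prop
  have hAne : ∀ S : Finset (Fin (n+1)), (∀ i ∈ S, (i:ℕ) < k) →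
      ∀ ζ ∈ Metric.closedBall (0:ℂ) 1, A S ζ ≠ 0 := by
    intro S hS ζ hζ
    refine Finset.prod_ne_zero_iff.2 fun i hi => fun h => ?_
    rw [sub_eq_zero] at h
    have h1 : ‖(r:ℂ)‖ = ‖(starRingEnd ℂ) (a i) * ζ‖ := by rw [h]
    rw [Complex.norm_of_nonneg hr.le, norm_mul, Complex.norm_conj] at h1
    have h2 : ‖ζ‖ ≤ 1 := by
      rw [← mem_closedBall_zero_iff]; exact hζ
    have h3 : ‖a i‖ * ‖ζ‖ ≤ ‖a i‖ :=
      mul_le_of_le_one_right (norm_nonneg _) h2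
    have := hlt i (hS i hi)
    linarith [h1, h3]
  set φ : ℂ → ℂ := fun ζ => (r:ℂ)^Ic.card * (p ζ * A I ζ) with hφdef
  set ψ : ℂ → ℂ := fun ζ => (r:ℂ)^I.card * (q ζ * A Ic ζ) with hψdef
  have hφhdc : IsHolomorphicDiskComponent φ :=
    ⟨continuousOn_const.mul (hp.1.mul (hAcont I).continuousOn),
     (differentiableOn_const _).mul (hp.2.mul ((hAdiff I).differentiableOn))⟩
  have hψhdc : IsHolomorphicDiskComponent ψ :=
    ⟨continuousOn_const.mul (hq.1.mul (hAcont Ic).continuousOn),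
     (differentiableOn_const _).mul (hq.2.mul ((hAdiff Ic).differentiableOn))⟩
  have hφ0 : ∀ ζ ∈ Metric.closedBall (0:ℂ) 1, φ ζ ≠ 0 := by
    intro ζ hζ
    exact mul_ne_zero (pow_ne_zero _ hrC)
      (mul_ne_zero (hp0 ζ hζ) (hAne I hIk ζ hζ))
  have hψ0 : ∀ ζ ∈ Metric.closedBall (0:ℂ) 1, ψ ζ ≠ 0 := by
    intro ζ hζ
    exact mul_ne_zero (pow_ne_zero _ hrC)
      (mul_ne_zero (hq0 ζ hζ) (hAne Ic hIck ζ hζ))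
  -- equality of moduli on the boundary circle
  have hAabs : ∀ ζ : ℂ, ‖ζ‖ = 1 → ∀ c : ℂ,
      ‖(r:ℂ) - (starRingEnd ℂ) c * ζ‖ = ‖(r:ℂ) * ζ - c‖ := by
    intro ζ hζ1 c
    have habs1 : ‖ζ‖ = 1 := by exact hζ1
    have h1 : ζ * (starRingEnd ℂ) ζ = 1 := by
      rw [Complex.mul_conj, Complex.normSq_eq_norm_sq, habs1]
      norm_num
    have hmc : (r:ℂ) - (starRingEnd ℂ) c * ζ = ζ * (starRingEnd ℂ) ((r:ℂ) * ζ - c) := by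
      rw [map_sub, map_mul, Complex.conj_ofReal]
      linear_combination (-(r:ℂ)) * h1
    rw [hmc, norm_mul, Complex.norm_conj, habs1, one_mul]
  have hφψbd : ∀ ζ : ℂ, ‖ζ‖ = 1 → ‖φ ζ‖ = ‖ψ ζ‖ := by
    intro ζ hζ1
    have hrabs : ‖(r:ℂ)‖ = r := by
      rw [Complex.norm_of_nonneg hr.le]
    have hAI : ‖A I ζ‖ = r ^ I.card * ∏ i ∈ I, ‖ζ - b i‖ := by
      rw [hAdef]
      simp only []
      rw [norm_prod]
      rw [Finset.prod_congr rfl (fun i _ => by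
        rw [hAabs ζ hζ1 (a i), hfac i ζ, norm_mul, hrabs])]
      rw [Finset.prod_mul_distrib, Finset.prod_const]
    have hAIc : ‖A Ic ζ‖ = r ^ Ic.card * ∏ i ∈ Ic, ‖ζ - b i‖ := by
      rw [hAdef]
      simp only []
      rw [norm_prod]
      rw [Finset.prod_congr rfl (fun i _ => by
        rw [hAabs ζ hζ1 (a i), hfac i ζ, norm_mul, hrabs])]
      rw [Finset.prod_mul_distrib, Finset.prod_const]
    have hu_abs : ‖u ζ‖ = (∏ i ∈ I, ‖ζ - b i‖) * ‖p ζ‖ := by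
      rw [hup ζ, norm_mul, norm_prod]
    have hv_abs : ‖v ζ‖ = (∏ i ∈ Ic, ‖ζ - b i‖) * ‖q ζ‖ := by
      rw [hvq ζ, norm_mul, norm_prod]
    have e1 : ‖φ ζ‖
        = r ^ Ic.card * r ^ I.card * ‖u ζ‖ := by
      rw [hφdef]
      simp only []
      rw [norm_mul, norm_mul, norm_pow, hrabs, hAI, hu_abs]
      ring
    have e2 : ‖ψ ζ‖
        = r ^ I.card * r ^ Ic.card * ‖v ζ‖ := by
      rw [hψdef]
      simp only []
      rw [norm_mul, norm_mul, norm_pow, hrabs, hAIc, hv_abs]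
      ring
    rw [e1, e2, hbd ζ hζ1]
    ring
  obtain ⟨lam, hlam1, hlameq⟩ := unimodular_ratio hφhdc hψhdc hφ0 hψ0 hφψbd
  -- assemble
  refine ⟨hcirc, I, lam, hIk, hlam1, hZu, ?_, ?_⟩
  · have hset : {i : Fin (n+1) | (i:ℕ) < k ∧ i ∉ I} = (↑Ic : Set (Fin (n+1))) := by
      ext i
      simp [hIcdef]
    rw [hset]
    exact hZv
  · intro ζ hζ
    have hIceq : Finset.univ.filter (fun i : Fin (n+1) => (i:ℕ) < k ∧ i ∉ I) = Ic := rfl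
    rw [hIceq]
    have e1 : (∏ i ∈ Ic, ((r:ℂ) * ζ - a i))
        = (r:ℂ) ^ Ic.card * ∏ i ∈ Ic, (ζ - b i) := by
      rw [Finset.prod_congr rfl (fun i _ => hfac i ζ), Finset.prod_mul_distrib,
        Finset.prod_const]
    have e2 : (∏ i ∈ I, ((r:ℂ) * ζ - a i))
        = (r:ℂ) ^ I.card * ∏ i ∈ I, (ζ - b i) := by
      rw [Finset.prod_congr rfl (fun i _ => hfac i ζ), Finset.prod_mul_distrib,
        Finset.prod_const]
    have key := hlameq ζ hζ
    rw [hφdef, hψdef] at key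
    simp only [] at key
    rw [hup ζ, hvq ζ, e1, e2]
    have hAI' : (∏ i ∈ I, ((r:ℂ) - (starRingEnd ℂ) (a i) * ζ)) = A I ζ := rfl
    have hAIc' : (∏ i ∈ Ic, ((r:ℂ) - (starRingEnd ℂ) (a i) * ζ)) = A Ic ζ := rfl
    rw [hAI', hAIc']
    linear_combination ((∏ i ∈ I, (ζ - b i)) * (∏ i ∈ Ic, (ζ - b i))) * key
end
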